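/- arXiv:1908.02378 — 3 statements merged into one kernel-verified Lean document; each statement's English description precedes it below -/
import Mathlib

section
/- For integers N ≥ 4 and 0 ≤ w ≤ N, K^N_w(4)/C(N,w) = 1 − 8w(N²−3N+4)/((N−1)(N−2)(N−3)) + 8w²(3N²−3N+4)/(N(N−1)(N−2)(N−3)) − 32w³/((N−1)(N−2)(N−3)) + 16w⁴/(N(N−1)(N−2)(N−3)). -/
/-- Binary Krawtchouk polynomial K^N_k(z) = Σ_{j=0}^{z} C(z,j)·C(N−z,k−j)·(−1)^j,
with the convention that C(n,m) = 0 for m < 0 (implemented by an `if`). -/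
def krawtchouk (N k z : ℕ) : ℤ :=
  ∑ j ∈ Finset.range (z + 1),
    (-1 : ℤ) ^ j * (z.choose j) * (if j ≤ k then ((N - z).choose (k - j) : ℤ) else 0)

lemma choose_step (m w : ℕ) : m.choose w * (m - w) = (m - 1).choose w * m := by
  cases m with
  | zero => simp
  | succ m' =>
    rcases le_or_gt w m' with h | h
    · have e : m' - w + 1 = m' + 1 - w := by omega
      have h2 := Nat.add_one_mul_choose_eq m' (m' - w)
      rw [Nat.choose_symm h, e,
        Nat.choose_symm (by omega : w ≤ m' + 1)] at h2
      simp only [Nat.add_sub_cancel]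
      rw [← h2]; ring
    · have h1 : Nat.choose m' w = 0 := Nat.choose_eq_zero_of_lt h
      have h2 : m' + 1 - w = 0 := by omega
      simp [h1, h2]

lemma key (d : ℕ) : ∀ N w j : ℕ, d ≤ N → j ≤ d → j ≤ w → w ≤ N →
    (N - d).choose (w - j) * N.descFactorial d
      = N.choose w * (w.descFactorial j * (N - w).descFactorial (d - j)) := by
  induction d with
  | zero =>
    intro N w j _ hj _ _
    interval_cases j
    simp
  | succ d ih =>
    intro N w j hdN hj hjw hw
    cases j with
    | zero =>
      have e1 : N - (d + 1) = N - d - 1 := by omega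
      have e2 : N.descFactorial (d + 1) = (N - d) * N.descFactorial d :=
        Nat.descFactorial_succ N d
      have e3 : (N - w).descFactorial (d + 1) = (N - w - d) * (N - w).descFactorial d :=
        Nat.descFactorial_succ (N - w) d
      have e4 : N - d - w = N - w - d := by omega
      calc (N - (d+1)).choose (w - 0) * N.descFactorial (d+1)
          = ((N - d - 1).choose w * (N - d)) * N.descFactorial d := by
            rw [e1, e2, Nat.sub_zero]; ring
        _ = (N - d).choose w * (N - d - w) * N.descFactorial d := by
            rw [choose_step]
        _ = ((N - d).choose (w - 0) * N.descFactorial d) * (N - w - d) := by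
            rw [Nat.sub_zero, e4]; ring
        _ = N.choose w * ((w.descFactorial 0 * (N - w).descFactorial d) * (N - w - d)) := by
            rw [ih N w 0 (by omega) (by omega) (by omega) hw, Nat.sub_zero]; ring
        _ = N.choose w * (w.descFactorial 0 * (N - w).descFactorial (d + 1 - 0)) := by
            rw [Nat.sub_zero, e3]; ring
    | succ i =>
      obtain ⟨N', rfl⟩ : ∃ m, N = m + 1 := ⟨N - 1, by omega⟩
      obtain ⟨w', rfl⟩ : ∃ m, w = m + 1 := ⟨w - 1, by omega⟩
      have e1 : N' + 1 - (d + 1) = N' - d := by omega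
      have e2 : w' + 1 - (i + 1) = w' - i := by omega
      have e3 : N' - w' = N' + 1 - (w' + 1) := by omega
      have e4 : d + 1 - (i + 1) = d - i := by omega
      have hdfN := Nat.succ_descFactorial_succ N' d
      have hdfw := Nat.succ_descFactorial_succ w' i
      have hcw := Nat.add_one_mul_choose_eq N' w'
      have hih := ih N' w' i (by omega) (by omega) (by omega) (by omega)
      rw [e3] at hih
      calc (N' + 1 - (d+1)).choose (w' + 1 - (i+1)) * (N' + 1).descFactorial (d+1)
          = (N' + 1) * ((N' - d).choose (w' - i) * N'.descFactorial d) := by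
            rw [e1, e2, hdfN]; ring
        _ = ((N' + 1) * N'.choose w') *
              (w'.descFactorial i * (N' + 1 - (w' + 1)).descFactorial (d - i)) := by
            rw [hih]; ring
        _ = ((N' + 1).choose (w' + 1) * (w' + 1)) *
              (w'.descFactorial i * (N' + 1 - (w' + 1)).descFactorial (d - i)) := by
            rw [show (N' + 1) * N'.choose w' = (N' + 1).choose (w' + 1) * (w' + 1) from hcw]
        _ = (N' + 1).choose (w' + 1) *
              ((w' + 1).descFactorial (i + 1) * (N' + 1 - (w' + 1)).descFactorial (d + 1 - (i + 1))) := by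
            rw [hdfw, e4]; ring

lemma desc_cast (n : ℕ) : ∀ k : ℕ,
    ((n.descFactorial k : ℕ) : ℚ) = ∏ i ∈ Finset.range k, ((n : ℚ) - i) := by
  intro k
  induction k with
  | zero => simp
  | succ k ih =>
    rcases le_or_gt (k + 1) n with h | h
    · rw [Nat.descFactorial_succ, Finset.prod_range_succ]
      push_cast [Nat.cast_sub (by omega : k ≤ n)]
      rw [ih]; ring
    · have h1 : n.descFactorial (k + 1) = 0 := Nat.descFactorial_eq_zero_iff_lt.2 h
      have h2 : n ∈ Finset.range (k + 1) := Finset.mem_range.2 h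
      rw [h1, Finset.prod_eq_zero h2 (by simp)]
      simp

/-- K^N_w(4)/C(N,w) for N ≥ 4 and w ≤ N. -/
theorem krawtchouk_four_normalized (N w : ℕ) (hN : 4 ≤ N) (hw : w ≤ N) :
    (krawtchouk N w 4 : ℚ) / (N.choose w : ℚ)
      = 1 - 8 * (w : ℚ) * ((N : ℚ) ^ 2 - 3 * N + 4) / (((N : ℚ) - 1) * (N - 2) * (N - 3))
        + 8 * (w : ℚ) ^ 2 * (3 * (N : ℚ) ^ 2 - 3 * N + 4)
            / ((N : ℚ) * (N - 1) * (N - 2) * (N - 3))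
        - 32 * (w : ℚ) ^ 3 / (((N : ℚ) - 1) * (N - 2) * (N - 3))
        + 16 * (w : ℚ) ^ 4 / ((N : ℚ) * (N - 1) * (N - 2) * (N - 3)) := by
  have hC : (N.choose w : ℚ) ≠ 0 := Nat.cast_ne_zero.mpr (Nat.choose_pos hw).ne'
  set x : ℚ := (w : ℚ) with hx
  set n : ℚ := (N : ℚ) with hn
  have hterm : ∀ j, j ≤ 4 →
      (if j ≤ w then (((N - 4).choose (w - j) : ℕ) : ℚ) else 0)
          * ((N.descFactorial 4 : ℕ) : ℚ)
        = (N.choose w : ℚ) * (((w.descFactorial j : ℕ) : ℚ)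
            * (((N - w).descFactorial (4 - j) : ℕ) : ℚ)) := by
    intro j hj
    split_ifs with h
    · exact_mod_cast congrArg (fun m : ℕ => (m : ℚ)) (key 4 N w j hN hj h hw)
    · have hz : w.descFactorial j = 0 := Nat.descFactorial_eq_zero_iff_lt.2 (by omega)
      simp [hz]
  have hk : (krawtchouk N w 4 : ℚ)
      = (if 0 ≤ w then (((N-4).choose (w-0) : ℕ) : ℚ) else 0)
        - 4 * (if 1 ≤ w then (((N-4).choose (w-1) : ℕ) : ℚ) else 0)
        + 6 * (if 2 ≤ w then (((N-4).choose (w-2) : ℕ) : ℚ) else 0)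
        - 4 * (if 3 ≤ w then (((N-4).choose (w-3) : ℕ) : ℚ) else 0)
        + (if 4 ≤ w then (((N-4).choose (w-4) : ℕ) : ℚ) else 0) := by
    simp only [krawtchouk, Finset.sum_range_succ, Finset.sum_range_zero]
    push_cast [apply_ite (fun z : ℤ => (z : ℚ))]
    norm_num
    all_goals split_ifs <;> norm_num [Nat.choose] <;> ring
  have hNw : (((N - w : ℕ)) : ℚ) = n - x := by
    push_cast [Nat.cast_sub hw]; rfl
  have dfw : ∀ k : ℕ, ((w.descFactorial k : ℕ) : ℚ) = ∏ i ∈ Finset.range k, (x - i) :=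
    fun k => desc_cast w k
  have dfNw : ∀ k : ℕ, (((N - w).descFactorial k : ℕ) : ℚ)
      = ∏ i ∈ Finset.range k, ((n - x) - i) := by
    intro k; rw [desc_cast (N - w) k, hNw]
  have dfN : ((N.descFactorial 4 : ℕ) : ℚ) = n * (n - 1) * (n - 2) * (n - 3) := by
    rw [desc_cast N 4]
    simp [Finset.prod_range_succ]
    try ring
  have hmain : (krawtchouk N w 4 : ℚ) * (n * (n - 1) * (n - 2) * (n - 3))
      = (N.choose w : ℚ) *
          ( ((n-x) * (n-x-1) * (n-x-2) * (n-x-3))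
            - 4 * (x * ((n-x) * (n-x-1) * (n-x-2)))
            + 6 * ((x * (x-1)) * ((n-x) * (n-x-1)))
            - 4 * ((x * (x-1) * (x-2)) * (n-x))
            + (x * (x-1) * (x-2) * (x-3)) ) := by
    have t0 := hterm 0 (by norm_num)
    have t1 := hterm 1 (by norm_num)
    have t2 := hterm 2 (by norm_num)
    have t3 := hterm 3 (by norm_num)
    have t4 := hterm 4 (by norm_num)
    simp only [dfw, dfNw, Finset.prod_range_succ, Finset.prod_range_zero, dfN] at t0 t1 t2 t3 t4
    rw [hk]
    push_cast at t0 t1 t2 t3 t4 ⊢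
    linear_combination t0 - 4 * t1 + 6 * t2 - 4 * t3 + t4
  have hn4 : (4 : ℚ) ≤ n := by rw [hn]; exact_mod_cast hN
  have h0 : n ≠ 0 := by intro h; rw [h] at hn4; norm_num at hn4
  have h1 : n - 1 ≠ 0 := sub_ne_zero.mpr (by intro h; rw [h] at hn4; norm_num at hn4)
  have h2 : n - 2 ≠ 0 := sub_ne_zero.mpr (by intro h; rw [h] at hn4; norm_num at hn4)
  have h3 : n - 3 ≠ 0 := sub_ne_zero.mpr (by intro h; rw [h] at hn4; norm_num at hn4)
  have hD : n * (n - 1) * (n - 2) * (n - 3) ≠ 0 :=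
    mul_ne_zero (mul_ne_zero (mul_ne_zero h0 h1) h2) h3
  rw [div_eq_iff hC]
  have hk2 : (krawtchouk N w 4 : ℚ)
      = (N.choose w : ℚ) *
          ( ((n-x) * (n-x-1) * (n-x-2) * (n-x-3))
            - 4 * (x * ((n-x) * (n-x-1) * (n-x-2)))
            + 6 * ((x * (x-1)) * ((n-x) * (n-x-1)))
            - 4 * ((x * (x-1) * (x-2)) * (n-x))
            + (x * (x-1) * (x-2) * (x-3)) ) / (n * (n - 1) * (n - 2) * (n - 3)) := by
    rw [eq_div_iff hD]; linear_combination hmain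
  rw [hk2]
  field_simp
  ring
end

section
/- Let g ≥ 1, n ≥ 1 be integers and N = 2gn. Then Σ_{j=0}^{n} 2^{−n} C(n,j) · (1 − 4·gj·(N−gj)/(N(N−1))) = (g(n+1) − 2)/(4gn − 2). -/
open Finset

lemma sum_jc_nat (n : ℕ) :
    2 * ∑ j ∈ range (n + 1), j * n.choose j = n * 2 ^ n := by
  cases n with
  | zero => simp
  | succ m =>
    rw [Finset.sum_range_succ']
    have h : ∀ i, (i + 1) * (m + 1).choose (i + 1) = (m + 1) * m.choose i := by
      intro i
      rw [mul_comm, ← Nat.add_one_mul_choose_eq]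
    simp only [h, Nat.mul_zero, Nat.zero_mul, Nat.add_zero, ← Finset.mul_sum,
      Nat.sum_range_choose]
    ring

lemma sum_jjc_nat (n : ℕ) :
    4 * ∑ j ∈ range (n + 1), j * j * n.choose j = n * (n + 1) * 2 ^ n := by
  cases n with
  | zero => simp
  | succ m =>
    rw [Finset.sum_range_succ']
    have h : ∀ i, (i + 1) * (i + 1) * (m + 1).choose (i + 1)
        = (m + 1) * (i * m.choose i) + (m + 1) * m.choose i := by
      intro i
      have := Nat.add_one_mul_choose_eq m i
      calc (i + 1) * (i + 1) * (m + 1).choose (i + 1)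
          = (i + 1) * ((m + 1).choose (i + 1) * (i + 1)) := by ring
        _ = (i + 1) * (Nat.succ m * m.choose i) := by rw [← Nat.add_one_mul_choose_eq]
        _ = (m + 1) * (i * m.choose i) + (m + 1) * m.choose i := by
            simp [Nat.succ_eq_add_one]; ring
    simp only [h, Finset.sum_add_distrib, ← Finset.mul_sum, Nat.sum_range_choose,
      Nat.mul_zero, Nat.zero_mul, Nat.add_zero]
    have h1 := sum_jc_nat m
    calc 4 * ((m + 1) * ∑ i ∈ range (m + 1), i * m.choose i + (m + 1) * 2 ^ m)
        = 2 * (m + 1) * (2 * ∑ i ∈ range (m + 1), i * m.choose i) + 4 * ((m + 1) * 2 ^ m) := by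
          ring
      _ = 2 * (m + 1) * (m * 2 ^ m) + 4 * ((m + 1) * 2 ^ m) := by rw [h1]
      _ = (m + 1) * (m + 1 + 1) * 2 ^ (m + 1) := by ring

lemma sum_c_q (n : ℕ) : ∑ j ∈ range (n + 1), (n.choose j : ℚ) = 2 ^ n := by
  exact_mod_cast congrArg (Nat.cast : ℕ → ℚ) (Nat.sum_range_choose n)

lemma sum_jc_q (n : ℕ) :
    ∑ j ∈ range (n + 1), (j : ℚ) * n.choose j = n * 2 ^ n / 2 := by
  have := sum_jc_nat n
  have h := congrArg (Nat.cast : ℕ → ℚ) this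
  push_cast at h
  linarith

lemma sum_jjc_q (n : ℕ) :
    ∑ j ∈ range (n + 1), (j : ℚ) * j * n.choose j = n * (n + 1) * 2 ^ n / 4 := by
  have := sum_jjc_nat n
  have h := congrArg (Nat.cast : ℕ → ℚ) this
  push_cast at h
  linarith

/-- v₂ = Σ_{j=0}^{n} 2^{−n} C(n,j)(1 − 4gj(N−gj)/(N(N−1))) = (g(n+1)−2)/(4gn−2),
where N = 2gn. -/
theorem gnu_v2 (g n : ℕ) (hg : 1 ≤ g) (hn : 1 ≤ n) (N : ℕ) (hN : N = 2 * g * n) :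
    ∑ j ∈ Finset.range (n + 1),
      (n.choose j : ℚ) / 2 ^ n *
        (1 - 4 * ((g : ℚ) * j) * ((N : ℚ) - (g : ℚ) * j) / ((N : ℚ) * ((N : ℚ) - 1)))
      = ((g : ℚ) * ((n : ℚ) + 1) - 2) / (4 * (g : ℚ) * n - 2) := by
  have hgq : (1 : ℚ) ≤ g := by exact_mod_cast hg
  have hnq : (1 : ℚ) ≤ n := by exact_mod_cast hn
  have hNq : (N : ℚ) = 2 * g * n := by rw [hN]; push_cast; ring
  have hN2 : (2 : ℚ) ≤ N := by rw [hNq]; nlinarith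
  have hN0 : (N : ℚ) ≠ 0 := by linarith
  have hN1 : (N : ℚ) - 1 ≠ 0 := by intro h; linarith
  have hp : (2 : ℚ) ^ n ≠ 0 := by positivity
  have key : ∀ j ∈ range (n + 1),
      (n.choose j : ℚ) / 2 ^ n *
        (1 - 4 * ((g : ℚ) * j) * ((N : ℚ) - (g : ℚ) * j) / ((N : ℚ) * ((N : ℚ) - 1)))
      = (1 / 2 ^ n) * (n.choose j : ℚ)
        + (-(4 * g) / (((N : ℚ) - 1) * 2 ^ n)) * ((j : ℚ) * n.choose j)
        + (4 * g ^ 2 / ((N : ℚ) * ((N : ℚ) - 1) * 2 ^ n)) * ((j : ℚ) * j * n.choose j) := by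
    intro j _
    field_simp
    ring
  rw [Finset.sum_congr rfl key]
  simp only [Finset.sum_add_distrib, ← Finset.mul_sum, sum_c_q, sum_jc_q, sum_jjc_q]
  rw [hNq]
  have h42 : 4 * (g : ℚ) * n - 2 ≠ 0 := by nlinarith
  have h2g : (2 : ℚ) * g * n ≠ 0 := by nlinarith
  have h2g1 : (2 : ℚ) * g * n - 1 ≠ 0 := by nlinarith
  field_simp
  field_simp
  ring
end

section
/- Let g ≥ 1, n ≥ 1 be integers, N = 2gn, and define v₃ = Σ_{j=0}^{n} 2^{−n} C(n,j) · P(gj) where P(w) = 1 + w(−6N²+6N−4)/(N(N−1)(N−2)) + 12w²/((N−1)(N−2)) − 8w³/(N(N−1)(N−2)). Then v₃ = (g²n(n+3) − 6gn + 2)/(4(gn−1)(2gn−1)), provided N ≥ 3 and gn > 1. -/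
set_option maxHeartbeats 1000000

open Finset

lemma sum_choose_q (n : ℕ) : ∑ j ∈ range (n+1), (n.choose j : ℚ) = 2^n := by
  have := Nat.sum_range_choose n
  exact_mod_cast this

lemma moments (n : ℕ) :
    (∑ j ∈ range (n+1), (n.choose j : ℚ) * j) * 2 = n * 2^n ∧
    (∑ j ∈ range (n+1), (n.choose j : ℚ) * (j:ℚ)^2) * 4 = n*((n:ℚ)+1) * 2^n ∧
    (∑ j ∈ range (n+1), (n.choose j : ℚ) * (j:ℚ)^3) * 8 = (n:ℚ)^2*((n:ℚ)+3) * 2^n := by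
  induction n with
  | zero => norm_num
  | succ n ih =>
    obtain ⟨ih1, ih2, ih3⟩ := ih
    have h0 : ∑ j ∈ range (n+1), (n.choose j : ℚ) = 2^n := sum_choose_q n
    have shift : ∀ k : ℕ, ∑ i ∈ range (n+1), (n.choose (i+1):ℚ) * ((i:ℚ)+1)^(k+1)
        = ∑ i ∈ range (n+1), (n.choose i:ℚ) * ((i:ℚ))^(k+1) := by
      intro k
      have e1 : ∑ j ∈ range (n+2), (n.choose j:ℚ) * (j:ℚ)^(k+1)
          = ∑ i ∈ range (n+1), (n.choose (i+1):ℚ) * ((i:ℚ)+1)^(k+1) := by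
        rw [Finset.sum_range_succ']
        push_cast
        simp
      rw [← e1, Finset.sum_range_succ, Nat.choose_succ_self]
      push_cast
      ring
    have key : ∀ k : ℕ, ∑ j ∈ range (n+2), ((n+1).choose j : ℚ) * (j:ℚ)^(k+1)
        = ∑ i ∈ range (n+1), (n.choose i : ℚ) * (((i:ℚ)+1)^(k+1) + (i:ℚ)^(k+1)) := by
      intro k
      rw [Finset.sum_range_succ']
      have e2 : ∀ i : ℕ, (((n+1).choose (i+1) : ℚ)) * ((i:ℚ)+1)^(k+1)
          = (n.choose i : ℚ) * ((i:ℚ)+1)^(k+1) + (n.choose (i+1) : ℚ) * ((i:ℚ)+1)^(k+1) := by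
        intro i
        rw [Nat.choose_succ_succ]
        push_cast
        ring
      calc (∑ i ∈ range (n+1), (((n+1).choose (i+1) : ℚ)) * (((i:ℕ)+1 : ℕ):ℚ)^(k+1))
            + ((n+1).choose 0 : ℚ) * ((0:ℕ):ℚ)^(k+1)
          = ∑ i ∈ range (n+1), ((n.choose i : ℚ) * ((i:ℚ)+1)^(k+1)
              + (n.choose (i+1) : ℚ) * ((i:ℚ)+1)^(k+1)) := by
            push_cast
            simp only [e2]
            simp
        _ = ∑ i ∈ range (n+1), (n.choose i : ℚ) * ((i:ℚ)+1)^(k+1)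
              + ∑ i ∈ range (n+1), (n.choose (i+1) : ℚ) * ((i:ℚ)+1)^(k+1) := by
            rw [Finset.sum_add_distrib]
        _ = ∑ i ∈ range (n+1), (n.choose i : ℚ) * (((i:ℚ)+1)^(k+1) + (i:ℚ)^(k+1)) := by
            rw [shift k, ← Finset.sum_add_distrib]
            apply Finset.sum_congr rfl
            intro i _
            ring
    have k1 := key 0
    have k2 := key 1
    have k3 := key 2
    have s1 : ∑ i ∈ range (n+1), (n.choose i : ℚ) * (((i:ℚ)+1)^(0+1) + (i:ℚ)^(0+1))
        = 2 * (∑ i ∈ range (n+1), (n.choose i:ℚ) * i) + ∑ i ∈ range (n+1), (n.choose i:ℚ) := by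
      rw [Finset.mul_sum, ← Finset.sum_add_distrib]
      apply Finset.sum_congr rfl; intro i _; ring
    have s2 : ∑ i ∈ range (n+1), (n.choose i : ℚ) * (((i:ℚ)+1)^(1+1) + (i:ℚ)^(1+1))
        = 2 * (∑ i ∈ range (n+1), (n.choose i:ℚ) * (i:ℚ)^2)
          + 2 * (∑ i ∈ range (n+1), (n.choose i:ℚ) * i)
          + ∑ i ∈ range (n+1), (n.choose i:ℚ) := by
      rw [Finset.mul_sum, Finset.mul_sum, ← Finset.sum_add_distrib, ← Finset.sum_add_distrib]
      apply Finset.sum_congr rfl; intro i _; ring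
    have s3 : ∑ i ∈ range (n+1), (n.choose i : ℚ) * (((i:ℚ)+1)^(2+1) + (i:ℚ)^(2+1))
        = 2 * (∑ i ∈ range (n+1), (n.choose i:ℚ) * (i:ℚ)^3)
          + 3 * (∑ i ∈ range (n+1), (n.choose i:ℚ) * (i:ℚ)^2)
          + 3 * (∑ i ∈ range (n+1), (n.choose i:ℚ) * i)
          + ∑ i ∈ range (n+1), (n.choose i:ℚ) := by
      rw [Finset.mul_sum, Finset.mul_sum, Finset.mul_sum, ← Finset.sum_add_distrib,
        ← Finset.sum_add_distrib, ← Finset.sum_add_distrib]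
      apply Finset.sum_congr rfl; intro i _; ring
    refine ⟨?_, ?_, ?_⟩
    · have : ∑ j ∈ range (n+2), ((n+1).choose j : ℚ) * j
          = ∑ j ∈ range (n+2), ((n+1).choose j : ℚ) * (j:ℚ)^(0+1) := by
        apply Finset.sum_congr rfl; intro j _; ring
      rw [this, k1, s1]
      push_cast
      linear_combination 2*ih1 + 2*h0
    · have : ∑ j ∈ range (n+2), ((n+1).choose j : ℚ) * (j:ℚ)^2
          = ∑ j ∈ range (n+2), ((n+1).choose j : ℚ) * (j:ℚ)^(1+1) := by norm_num
      rw [this, k2, s2]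
      push_cast
      linear_combination 2*ih2 + 4*ih1 + 4*h0
    · have : ∑ j ∈ range (n+2), ((n+1).choose j : ℚ) * (j:ℚ)^3
          = ∑ j ∈ range (n+2), ((n+1).choose j : ℚ) * (j:ℚ)^(2+1) := by norm_num
      rw [this, k3, s3]
      push_cast
      linear_combination 2*ih3 + 6*ih2 + 12*ih1 + 8*h0

/-- v₃ = Σ_{j=0}^{n} 2^{−n} C(n,j)·P(gj), where
P(w) = 1 + w(−6N²+6N−4)/(N(N−1)(N−2)) + 12w²/((N−1)(N−2)) − 8w³/(N(N−1)(N−2)),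
equals (g²n(n+3) − 6gn + 2)/(4(gn−1)(2gn−1)) for N = 2gn with N ≥ 3 and gn > 1. -/
theorem gnu_v3 (g n : ℕ) (hg : 1 ≤ g) (hn : 1 ≤ n) (N : ℕ) (hN : N = 2 * g * n)
    (hN3 : 3 ≤ N) (hgn : 1 < g * n) :
    (∑ j ∈ Finset.range (n + 1),
      (n.choose j : ℚ) / 2 ^ n *
        (1 + ((g : ℚ) * j) * (-6 * (N : ℚ) ^ 2 + 6 * N - 4) / ((N : ℚ) * (N - 1) * (N - 2))
           + 12 * ((g : ℚ) * j) ^ 2 / (((N : ℚ) - 1) * ((N : ℚ) - 2))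
           - 8 * ((g : ℚ) * j) ^ 3 / ((N : ℚ) * (N - 1) * (N - 2))))
      = ((g : ℚ) ^ 2 * n * ((n : ℚ) + 3) - 6 * (g : ℚ) * n + 2)
          / (4 * ((g : ℚ) * n - 1) * (2 * (g : ℚ) * n - 1)) := by
  obtain ⟨h1, h2, h3⟩ := moments n
  have h0 := sum_choose_q n
  have hNQ : (N:ℚ) = 2 * g * n := by rw [hN]; push_cast; ring
  have hN3' : (3:ℚ) ≤ (N:ℚ) := by exact_mod_cast hN3
  have hN0 : (N:ℚ) ≠ 0 := by intro h; rw [h] at hN3'; norm_num at hN3'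
  have hN1 : (N:ℚ) - 1 ≠ 0 := by intro h; nlinarith
  have hN2 : (N:ℚ) - 2 ≠ 0 := by intro h; nlinarith
  have hgn' : (2:ℚ) ≤ (g:ℚ) * n := by
    have : (2:ℕ) ≤ g * n := hgn
    exact_mod_cast this
  have hd1 : (g:ℚ) * n - 1 ≠ 0 := by intro h; nlinarith
  have hd2 : 2 * (g:ℚ) * n - 1 ≠ 0 := by intro h; nlinarith
  have hp : (2:ℚ)^n ≠ 0 := by positivity
  set a : ℚ := ((g:ℚ) * (-6 * (N : ℚ) ^ 2 + 6 * N - 4)) / (((N : ℚ) * (N - 1) * (N - 2)) * 2^n) with ha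
  set b : ℚ := (12 * (g:ℚ)^2) / ((((N : ℚ) - 1) * ((N : ℚ) - 2)) * 2^n) with hb
  set c : ℚ := (-8 * (g:ℚ)^3) / (((N : ℚ) * (N - 1) * (N - 2)) * 2^n) with hc
  have hLHS : (∑ j ∈ Finset.range (n + 1),
      (n.choose j : ℚ) / 2 ^ n *
        (1 + ((g : ℚ) * j) * (-6 * (N : ℚ) ^ 2 + 6 * N - 4) / ((N : ℚ) * (N - 1) * (N - 2))
           + 12 * ((g : ℚ) * j) ^ 2 / (((N : ℚ) - 1) * ((N : ℚ) - 2))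
           - 8 * ((g : ℚ) * j) ^ 3 / ((N : ℚ) * (N - 1) * (N - 2))))
      = (∑ j ∈ range (n+1), (n.choose j : ℚ)) * (1 / 2^n)
        + (∑ j ∈ range (n+1), (n.choose j : ℚ) * j) * a
        + (∑ j ∈ range (n+1), (n.choose j : ℚ) * (j:ℚ)^2) * b
        + (∑ j ∈ range (n+1), (n.choose j : ℚ) * (j:ℚ)^3) * c := by
    rw [Finset.sum_mul, Finset.sum_mul, Finset.sum_mul, Finset.sum_mul,
      ← Finset.sum_add_distrib, ← Finset.sum_add_distrib, ← Finset.sum_add_distrib]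
    apply Finset.sum_congr rfl
    intro j _
    rw [ha, hb, hc]
    field_simp
    ring
  rw [hLHS, h0]
  have m1 : ∑ j ∈ range (n+1), (n.choose j : ℚ) * j = (n:ℚ) * 2^n / 2 := by linarith
  have m2 : ∑ j ∈ range (n+1), (n.choose j : ℚ) * (j:ℚ)^2 = (n:ℚ)*((n:ℚ)+1) * 2^n / 4 := by
    linarith
  have m3 : ∑ j ∈ range (n+1), (n.choose j : ℚ) * (j:ℚ)^3 = (n:ℚ)^2*((n:ℚ)+3) * 2^n / 8 := by
    linarith
  rw [m1, m2, m3, ha, hb, hc, hNQ]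
  have hA : 2*(g:ℚ)*n ≠ 0 := by rw [hNQ] at hN0; exact hN0
  have hB : 2*(g:ℚ)*n - 1 ≠ 0 := by rw [hNQ] at hN1; exact hN1
  have hC : 2*(g:ℚ)*n - 2 ≠ 0 := by rw [hNQ] at hN2; exact hN2
  field_simp
  have hE : (1 - (n:ℚ)*g*3 + (n:ℚ)^2*g^2*2) ≠ 0 := by
    have : (1 - (n:ℚ)*g*3 + (n:ℚ)^2*g^2*2) = ((g:ℚ)*n - 1) * (2*(g:ℚ)*n - 1) := by ring
    rw [this]; exact mul_ne_zero hd1 hd2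
  linear_combination (-32) * mul_inv_cancel₀ hE
end
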